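/- Let a_n > 0, r_n ≥ 1 be positive integers, and v_n = (a_1 + (a_2 + ... + a_n^{1/r_n})^{1/r_2})^{1/r_1} the n-th approximant of the continued radical. Define denesting functions f_0(y) = y and f_k(y) = f_{k-1}(y)^{r_k} - a_k. Then for every n ≥ 1, v_{n+1} - v_n = a_{n+1}^{1/r_{n+1}} / ∏_{i=1}^n (∑_{j=0}^{r_i - 1} f_{i-1}(v_{n+1})^j · f_{i-1}(v_n)^{r_i - 1 - j}). -/

import Mathlib

/-- `rad a r n i = (a i + (a (i+1) + ⋯ + (a n) ^ (1/r n)) ^ (1/r (i+1))) ^ (1/r i)`;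
the `n`-th approximant `v n` of the continued radical is `rad a r n 1`. -/
noncomputable def rad (a : ℕ → ℝ) (r : ℕ → ℕ) (n : ℕ) : ℕ → ℝ
  | i => if _ : i ≤ n then (a i + rad a r n (i + 1)) ^ ((r i : ℝ)⁻¹) else 0
termination_by i => n + 1 - i
decreasing_by omega

/-- The denesting functions: `den a r 0 y = y`, `den a r k y = (den a r (k-1) y) ^ (r k) - a k`. -/
noncomputable def den (a : ℕ → ℝ) (r : ℕ → ℕ) : ℕ → ℝ → ℝ
  | 0, y => y
  | k + 1, y => (den a r k y) ^ (r (k + 1)) - a (k + 1)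

lemma rad_nonneg (a : ℕ → ℝ) (r : ℕ → ℕ) (ha : ∀ n, 1 ≤ n → 0 < a n) (n : ℕ) :
    ∀ i, 1 ≤ i → 0 ≤ rad a r n i
  | i, hi => by
    rw [rad]
    split
    · apply Real.rpow_nonneg
      have h1 := rad_nonneg a r ha n (i + 1) (by omega)
      have h2 := ha i hi
      linarith
    · exact le_refl 0
termination_by i => n + 1 - i
decreasing_by omega

lemma rad_base_pos (a : ℕ → ℝ) (r : ℕ → ℕ) (ha : ∀ n, 1 ≤ n → 0 < a n) (n i : ℕ)
    (hi : 1 ≤ i) : 0 < a i + rad a r n (i + 1) := by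
  have h1 := rad_nonneg a r ha n (i + 1) (by omega)
  have h2 := ha i hi
  linarith

lemma rad_pos (a : ℕ → ℝ) (r : ℕ → ℕ) (ha : ∀ n, 1 ≤ n → 0 < a n) (n i : ℕ)
    (hi : 1 ≤ i) (hin : i ≤ n) : 0 < rad a r n i := by
  rw [rad, dif_pos hin]
  exact Real.rpow_pos_of_pos (rad_base_pos a r ha n i hi) _

lemma rad_pow (a : ℕ → ℝ) (r : ℕ → ℕ) (ha : ∀ n, 1 ≤ n → 0 < a n)
    (hr : ∀ n, 1 ≤ r n) (n i : ℕ) (hi : 1 ≤ i) (hin : i ≤ n) :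
    (rad a r n i) ^ (r i) = a i + rad a r n (i + 1) := by
  rw [rad, dif_pos hin, ← Real.rpow_natCast _ (r i),
    ← Real.rpow_mul (rad_base_pos a r ha n i hi).le,
    inv_mul_cancel₀ (by exact_mod_cast (hr i).trans_lt' one_pos |>.ne'), Real.rpow_one]

lemma den_eq (a : ℕ → ℝ) (r : ℕ → ℕ) (ha : ∀ n, 1 ≤ n → 0 < a n)
    (hr : ∀ n, 1 ≤ r n) (n : ℕ) (hn : 1 ≤ n) :
    ∀ k, k ≤ n → den a r k (rad a r n 1) = rad a r n (k + 1) := by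
  intro k
  induction k with
  | zero => intro _; rfl
  | succ k ih =>
    intro hk
    rw [den, ih (by omega), rad_pow a r ha hr n (k + 1) (by omega) hk]
    ring

theorem key_identity (a : ℕ → ℝ) (r : ℕ → ℕ) (ha : ∀ n, 1 ≤ n → 0 < a n)
    (hr : ∀ n, 1 ≤ r n) :
    ∀ n, 1 ≤ n →
      rad a r (n + 1) 1 - rad a r n 1 =
        (a (n + 1)) ^ ((r (n + 1) : ℝ)⁻¹) /
          ∏ i ∈ Finset.Icc 1 n, ∑ j ∈ Finset.range (r i),
            (den a r (i - 1) (rad a r (n + 1) 1)) ^ j *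
              (den a r (i - 1) (rad a r n 1)) ^ (r i - 1 - j) := by
  intro n hn
  set v' := rad a r (n + 1) 1 with hv'
  set v := rad a r n 1 with hv
  set S : ℕ → ℝ := fun i => ∑ j ∈ Finset.range (r i),
      (den a r (i - 1) v') ^ j * (den a r (i - 1) v) ^ (r i - 1 - j) with hS
  -- telescoping
  have key : ∀ m, m ≤ n → den a r m v' - den a r m v =
      (v' - v) * ∏ i ∈ Finset.Icc 1 m, S i := by
    intro m
    induction m with
    | zero => intro _; simp [den]
    | succ m ih =>
      intro hm
      rw [show den a r (m + 1) v' = (den a r m v') ^ (r (m + 1)) - a (m + 1) from rfl,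
        show den a r (m + 1) v = (den a r m v) ^ (r (m + 1)) - a (m + 1) from rfl]
      have hgeom := geom_sum₂_mul (den a r m v') (den a r m v) (r (m + 1))
      have : S (m + 1) = ∑ j ∈ Finset.range (r (m + 1)),
          (den a r m v') ^ j * (den a r m v) ^ (r (m + 1) - 1 - j) := by
        simp [hS]
      rw [Finset.prod_Icc_succ_top (by omega), ← mul_assoc, ← ih (by omega)]
      rw [this]
      linear_combination -hgeom
  -- values at m = n
  have hden_v' : den a r n v' = (a (n + 1)) ^ ((r (n + 1) : ℝ)⁻¹) := by
    rw [hv', den_eq a r ha hr (n + 1) (by omega) n (by omega)]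
    rw [rad, dif_pos (le_refl (n + 1))]
    rw [show rad a r (n + 1) (n + 1 + 1) = 0 by rw [rad, dif_neg (by omega)]]
    rw [add_zero]
  have hden_v : den a r n v = 0 := by
    rw [hv, den_eq a r ha hr n hn n le_rfl, rad, dif_neg (by omega)]
  have hmain : (a (n + 1)) ^ ((r (n + 1) : ℝ)⁻¹) = (v' - v) * ∏ i ∈ Finset.Icc 1 n, S i := by
    have := key n le_rfl
    rw [hden_v', hden_v, sub_zero] at this
    exact this
  -- positivity of the product
  have hSpos : ∀ i ∈ Finset.Icc 1 n, 0 < S i := by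
    intro i hi
    simp only [Finset.mem_Icc] at hi
    have hx : 0 < den a r (i - 1) v' := by
      rw [hv', den_eq a r ha hr (n + 1) (by omega) (i - 1) (by omega),
        show i - 1 + 1 = i by omega]
      exact rad_pos a r ha (n + 1) i hi.1 (by omega)
    have hy : 0 < den a r (i - 1) v := by
      rw [hv, den_eq a r ha hr n hn (i - 1) (by omega), show i - 1 + 1 = i by omega]
      exact rad_pos a r ha n i hi.1 hi.2
    apply Finset.sum_pos
    · intro j _
      positivity
    · exact ⟨0, Finset.mem_range.mpr (hr i)⟩
  have hP : (0 : ℝ) < ∏ i ∈ Finset.Icc 1 n, S i := Finset.prod_pos hSpos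
  rw [eq_div_iff hP.ne', ← hmain]
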